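/- (Bhattacharya–Chakraborty–Mallick exact sampling identity) Let Λ be d×d positive definite diagonal, Φ an m×d matrix, and α ∈ ℝ^m. If u ~ N(0, Λ) and δ ~ N(0, I_m) are independent, v = Φu + δ, w = (ΦΛΦ' + I_m)^{−1}(α − v), and θ = u + ΛΦ'w, then θ ~ N((Φ'Φ + Λ^{−1})^{−1}Φ'α, (Φ'Φ + Λ^{−1})^{−1}). -/

import Mathlib

open Matrix MeasureTheory

section helpers
variable {m d : ℕ}

lemma alg_push (Λ : Matrix (Fin d) (Fin d) ℝ) (hΛ : Λ.PosDef)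
    (Φ : Matrix (Fin m) (Fin d) ℝ) :
    Λ * Φᵀ * (Φ * Λ * Φᵀ + 1)⁻¹ = (Φᵀ * Φ + Λ⁻¹)⁻¹ * Φᵀ := by
  have hΛt : Λᵀ = Λ := by
    have := hΛ.isHermitian.eq
    rwa [conjTranspose_eq_transpose_of_trivial] at this
  have hΛdet : IsUnit Λ.det := (Matrix.isUnit_iff_isUnit_det Λ).mp hΛ.isUnit
  have hNpd : (Φᵀ * Φ + Λ⁻¹).PosDef := by
    have h1 : (Φᵀ * Φ).PosSemidef := by
      have := Matrix.posSemidef_conjTranspose_mul_self Φ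
      rwa [conjTranspose_eq_transpose_of_trivial] at this
    exact Matrix.PosDef.posSemidef_add h1 hΛ.inv
  have hBpd : (Φ * Λ * Φᵀ + 1).PosDef := by
    have h1 : (Φ * Λ * Φᵀ).PosSemidef := by
      have := hΛ.posSemidef.mul_mul_conjTranspose_same Φ
      rwa [conjTranspose_eq_transpose_of_trivial] at this
    exact Matrix.PosDef.posSemidef_add h1 Matrix.PosDef.one
  have hNdet : IsUnit (Φᵀ * Φ + Λ⁻¹).det := (Matrix.isUnit_iff_isUnit_det _).mp hNpd.isUnit
  have hBdet : IsUnit (Φ * Λ * Φᵀ + 1).det := (Matrix.isUnit_iff_isUnit_det _).mp hBpd.isUnit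
  have h1 : (Φᵀ * Φ + Λ⁻¹) * (Λ * Φᵀ) = Φᵀ * (Φ * Λ * Φᵀ + 1) := by
    rw [Matrix.add_mul, Matrix.mul_add, Matrix.mul_one, ← Matrix.mul_assoc Λ⁻¹ Λ Φᵀ,
      Matrix.nonsing_inv_mul _ hΛdet, Matrix.one_mul]
    simp [Matrix.mul_assoc]
  have h2 : Λ * Φᵀ = (Φᵀ * Φ + Λ⁻¹)⁻¹ * (Φᵀ * (Φ * Λ * Φᵀ + 1)) := by
    rw [← h1, ← Matrix.mul_assoc, Matrix.nonsing_inv_mul _ hNdet, Matrix.one_mul]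
  rw [h2, Matrix.mul_assoc, Matrix.mul_assoc, Matrix.mul_nonsing_inv _ hBdet, Matrix.mul_one]

lemma alg_cov (Λ : Matrix (Fin d) (Fin d) ℝ) (hΛ : Λ.PosDef)
    (Φ : Matrix (Fin m) (Fin d) ℝ) :
    (1 - Λ * Φᵀ * (Φ * Λ * Φᵀ + 1)⁻¹ * Φ) *
        (Λ * (1 - Λ * Φᵀ * (Φ * Λ * Φᵀ + 1)⁻¹ * Φ)ᵀ) +
      Λ * Φᵀ * (Φ * Λ * Φᵀ + 1)⁻¹ * (Λ * Φᵀ * (Φ * Λ * Φᵀ + 1)⁻¹)ᵀ =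
    (Φᵀ * Φ + Λ⁻¹)⁻¹ := by
  have hΛt : Λᵀ = Λ := by
    have := hΛ.isHermitian.eq
    rwa [conjTranspose_eq_transpose_of_trivial] at this
  have hΛdet : IsUnit Λ.det := (Matrix.isUnit_iff_isUnit_det Λ).mp hΛ.isUnit
  have hNpd : (Φᵀ * Φ + Λ⁻¹).PosDef := by
    have h1 : (Φᵀ * Φ).PosSemidef := by
      have := Matrix.posSemidef_conjTranspose_mul_self Φ
      rwa [conjTranspose_eq_transpose_of_trivial] at this
    exact Matrix.PosDef.posSemidef_add h1 hΛ.inv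
  have hNdet : IsUnit (Φᵀ * Φ + Λ⁻¹).det := (Matrix.isUnit_iff_isUnit_det _).mp hNpd.isUnit
  set S : Matrix (Fin d) (Fin d) ℝ := (Φᵀ * Φ + Λ⁻¹)⁻¹ with hS
  have hK : Λ * Φᵀ * (Φ * Λ * Φᵀ + 1)⁻¹ = S * Φᵀ := alg_push Λ hΛ Φ
  have hSt : Sᵀ = S := by
    rw [hS, Matrix.transpose_nonsing_inv]
    congr 1
    simp [Matrix.transpose_add, Matrix.transpose_mul, Matrix.transpose_nonsing_inv, hΛt]
  have hSN : S * (Φᵀ * Φ + Λ⁻¹) = 1 := Matrix.nonsing_inv_mul _ hNdet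
  have hNS : (Φᵀ * Φ + Λ⁻¹) * S = 1 := Matrix.mul_nonsing_inv _ hNdet
  have hP : 1 - S * Φᵀ * Φ = S * Λ⁻¹ := by
    have h : S * Φᵀ * Φ + S * Λ⁻¹ = 1 := by
      rw [Matrix.mul_assoc, ← Matrix.mul_add, hSN]
    rw [sub_eq_iff_eq_add]
    rw [← h, add_comm]
  rw [hK, hP]
  have hPt : (S * Λ⁻¹)ᵀ = Λ⁻¹ * S := by
    rw [Matrix.transpose_mul, hSt, Matrix.transpose_nonsing_inv, hΛt]
  have hKt : (S * Φᵀ)ᵀ = Φ * S := by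
    rw [Matrix.transpose_mul, hSt, Matrix.transpose_transpose]
  rw [hPt, hKt]
  have h1 : S * Λ⁻¹ * (Λ * (Λ⁻¹ * S)) = S * (Λ⁻¹ * S) := by
    rw [← Matrix.mul_assoc Λ Λ⁻¹ S, Matrix.mul_nonsing_inv _ hΛdet, Matrix.one_mul, Matrix.mul_assoc]
  have h2 : S * Φᵀ * (Φ * S) = S * (Φᵀ * Φ * S) := by
    simp [Matrix.mul_assoc]
  rw [h1, h2, ← Matrix.mul_add]
  rw [show Λ⁻¹ * S + Φᵀ * Φ * S = (Φᵀ * Φ + Λ⁻¹) * S by rw [Matrix.add_mul, add_comm], hNS, Matrix.mul_one]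

lemma bcm_measurable_mulVec {n p : ℕ} {X : Type*} [MeasurableSpace X]
    (M : Matrix (Fin n) (Fin p) ℝ) {f : X → Fin p → ℝ} (hf : Measurable f) :
    Measurable fun x => M *ᵥ f x := by
  apply measurable_pi_lambda
  intro i
  simp only [Matrix.mulVec, dotProduct]
  exact Finset.measurable_sum _ fun j _ => ((measurable_pi_apply j).comp hf).const_mul (M i j)

end helpers

/-- A measure on ι → ℝ is multivariate Gaussian with mean `mean` and covariance `C` iff
every linear functional of it is univariate Gaussian with the induced mean and variance. -/
def IsGaussianVec {ι : Type*} [Fintype ι] (μ : Measure (ι → ℝ))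
    (mean : ι → ℝ) (C : Matrix ι ι ℝ) : Prop :=
  ∀ a : ι → ℝ,
    μ.map (fun x => ∑ i, a i * x i) =
      ProbabilityTheory.gaussianReal (∑ i, a i * mean i)
        (Real.toNNReal (a ⬝ᵥ C.mulVec a))

/-- Bhattacharya–Chakraborty–Mallick exact sampling identity: if u ~ N(0, Λ) and
δ ~ N(0, I_m) are independent (jointly Gaussian with block-diagonal covariance),
v = Φu + δ, w = (ΦΛΦ' + I_m)⁻¹(α − v), and θ = u + ΛΦ'w, then
θ ~ N((Φ'Φ + Λ⁻¹)⁻¹Φ'α, (Φ'Φ + Λ⁻¹)⁻¹). -/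
theorem stmt_11 (m d : ℕ) (Λ : Matrix (Fin d) (Fin d) ℝ)
    (hdiag : Λ.IsDiag) (hΛ : Λ.PosDef)
    (Φ : Matrix (Fin m) (Fin d) ℝ) (α : Fin m → ℝ)
    (μ : Measure ((Fin d ⊕ Fin m) → ℝ)) [IsProbabilityMeasure μ]
    (hz : IsGaussianVec μ 0
      (Matrix.fromBlocks Λ 0 0 (1 : Matrix (Fin m) (Fin m) ℝ))) :
    IsGaussianVec
      (μ.map fun z =>
        (fun i => z (Sum.inl i)) +
          (Λ * Φᵀ).mulVec
            ((Φ * Λ * Φᵀ + 1)⁻¹.mulVec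
              (α - (Φ.mulVec (fun i => z (Sum.inl i)) + fun i => z (Sum.inr i)))))
      ((Φᵀ * Φ + Λ⁻¹)⁻¹.mulVec (Φᵀ.mulVec α))
      ((Φᵀ * Φ + Λ⁻¹)⁻¹) := by
  intro a
  classical
  set S : Matrix (Fin d) (Fin d) ℝ := (Φᵀ * Φ + Λ⁻¹)⁻¹ with hS
  set K : Matrix (Fin d) (Fin m) ℝ := Λ * Φᵀ * (Φ * Λ * Φᵀ + 1)⁻¹ with hKdef
  have hpush : K = S * Φᵀ := alg_push Λ hΛ Φ
  have hcov : (1 - K * Φ) * (Λ * (1 - K * Φ)ᵀ) + K * Kᵀ = S := alg_cov Λ hΛ Φ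
  set c : (Fin d ⊕ Fin m) → ℝ :=
    Sum.elim (a ᵥ* (1 - K * Φ)) (-(a ᵥ* K)) with hc
  set k : ℝ := a ⬝ᵥ (K *ᵥ α) with hk
  have hu : Measurable fun z : (Fin d ⊕ Fin m) → ℝ => (fun i => z (Sum.inl i)) :=
    measurable_pi_lambda _ fun i => measurable_pi_apply _
  have hδ : Measurable fun z : (Fin d ⊕ Fin m) → ℝ => (fun i => z (Sum.inr i)) :=
    measurable_pi_lambda _ fun i => measurable_pi_apply _
  have hF : Measurable fun z : (Fin d ⊕ Fin m) → ℝ =>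
      (fun i => z (Sum.inl i)) +
        (Λ * Φᵀ).mulVec
          ((Φ * Λ * Φᵀ + 1)⁻¹.mulVec
            (α - (Φ.mulVec (fun i => z (Sum.inl i)) + fun i => z (Sum.inr i)))) := by
    refine hu.add ?_
    exact bcm_measurable_mulVec _ (bcm_measurable_mulVec _
      (measurable_const.sub ((bcm_measurable_mulVec Φ hu).add hδ)))
  have hg : Measurable fun x : Fin d → ℝ => ∑ i, a i * x i :=
    Finset.measurable_sum _ fun i _ => by fun_prop
  have hℓ : Measurable fun z : (Fin d ⊕ Fin m) → ℝ => ∑ j, c j * z j :=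
    Finset.measurable_sum _ fun j _ => by fun_prop
  rw [Measure.map_map hg hF]
  have hcomp : ((fun x : Fin d → ℝ => ∑ i, a i * x i) ∘ fun z : (Fin d ⊕ Fin m) → ℝ =>
      (fun i => z (Sum.inl i)) +
        (Λ * Φᵀ).mulVec
          ((Φ * Λ * Φᵀ + 1)⁻¹.mulVec
            (α - (Φ.mulVec (fun i => z (Sum.inl i)) + fun i => z (Sum.inr i)))))
      = (fun x => x + k) ∘ (fun z => ∑ j, c j * z j) := by
    funext z
    set u : Fin d → ℝ := fun i => z (Sum.inl i) with hud
    set δ : Fin m → ℝ := fun i => z (Sum.inr i) with hδd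
    have hzz : z = Sum.elim u δ := by funext j; cases j <;> rfl
    show a ⬝ᵥ (u + (Λ * Φᵀ) *ᵥ ((Φ * Λ * Φᵀ + 1)⁻¹ *ᵥ (α - (Φ *ᵥ u + δ))))
      = c ⬝ᵥ z + k
    rw [Matrix.mulVec_mulVec, ← hKdef, hzz, hc, hk]
    rw [sumElim_dotProduct_sumElim]
    simp only [dotProduct_add, dotProduct_sub, Matrix.dotProduct_mulVec,
      Matrix.vecMul_vecMul, Matrix.vecMul_sub, Matrix.vecMul_one, sub_dotProduct,
      neg_dotProduct]
    ring
  rw [hcomp, ← Measure.map_map (measurable_add_const k) hℓ, hz c]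
  rw [ProbabilityTheory.gaussianReal_map_add_const k]
  have hmean : (∑ j, c j * (0 : (Fin d ⊕ Fin m) → ℝ) j) + k
      = ∑ i, a i * ((Φᵀ * Φ + Λ⁻¹)⁻¹.mulVec (Φᵀ.mulVec α)) i := by
    simp only [Pi.zero_apply, mul_zero, Finset.sum_const_zero, zero_add]
    show k = a ⬝ᵥ (S *ᵥ (Φᵀ *ᵥ α))
    rw [Matrix.mulVec_mulVec, ← hpush, hk]
  have hvar : c ⬝ᵥ (Matrix.fromBlocks Λ 0 0 (1 : Matrix (Fin m) (Fin m) ℝ)) *ᵥ c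
      = a ⬝ᵥ (Φᵀ * Φ + Λ⁻¹)⁻¹ *ᵥ a := by
    rw [hc, Matrix.fromBlocks_mulVec]
    simp only [Sum.elim_comp_inl, Sum.elim_comp_inr, Matrix.zero_mulVec, Matrix.one_mulVec,
      add_zero, zero_add]
    rw [sumElim_dotProduct_sumElim]
    rw [Matrix.mulVec_vecMul, Matrix.dotProduct_mulVec, Matrix.vecMul_vecMul]
    rw [dotProduct_neg, neg_dotProduct, neg_neg]
    conv_lhs => rw [show a ᵥ* K ⬝ᵥ a ᵥ* K = a ᵥ* K ⬝ᵥ Kᵀ *ᵥ a by rw [Matrix.mulVec_transpose]]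
    rw [Matrix.dotProduct_mulVec, Matrix.vecMul_vecMul]
    rw [← add_dotProduct, ← Matrix.vecMul_add, hcov]
    rw [← Matrix.dotProduct_mulVec, hS]
  rw [hmean, hvar]
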